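/- Let E be a finite directed graph with no sources, and let t₊ = e₁ + ... + eₙ, t₋ = e₁* + ... + eₙ* be as above, where eᵢ is a chosen edge with r(eᵢ) = vᵢ for each vertex vᵢ. Then t₊t₋ is a full idempotent of L_K(E)₀ if and only if E has no sinks. -/

import Mathlib

/-- A finite directed graph. -/
structure DirGraph where
  V : Type
  E : Type
  [fintypeV : Fintype V]
  [fintypeE : Fintype E]
  [decEqV : DecidableEq V]
  [decEqE : DecidableEq E]
  /-- source of an edge -/
  s : E → V
  /-- range of an edge -/
  r : E → V

attribute [instance] DirGraph.fintypeV DirGraph.fintypeE DirGraph.decEqV DirGraph.decEqE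

namespace DirGraph
/-- A sink is a vertex emitting no edges. -/
def IsSink (G : DirGraph) (v : G.V) : Prop := ∀ e : G.E, G.s e ≠ v
/-- A source is a vertex receiving no edges. -/
def IsSource (G : DirGraph) (v : G.V) : Prop := ∀ e : G.E, G.r e ≠ v
end DirGraph

/-- Generators of the Leavitt path algebra: vertices, edges and ghost edges. -/
inductive LGen (G : DirGraph) : Type
  | vert (v : G.V)
  | edge (e : G.E)
  | ghost (e : G.E)

open FreeAlgebra in
/-- The defining relations of the Leavitt path algebra of a finite graph. -/
inductive LRel (K : Type) [Field K] (G : DirGraph) :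
    FreeAlgebra K (LGen G) → FreeAlgebra K (LGen G) → Prop
  | vert_mul (v w : G.V) : LRel K G (ι K (LGen.vert v) * ι K (LGen.vert w))
      (if v = w then ι K (LGen.vert v) else 0)
  | sum_verts : LRel K G (∑ v : G.V, ι K (LGen.vert v)) 1
  | s_edge (e : G.E) : LRel K G (ι K (LGen.vert (G.s e)) * ι K (LGen.edge e)) (ι K (LGen.edge e))
  | edge_r (e : G.E) : LRel K G (ι K (LGen.edge e) * ι K (LGen.vert (G.r e))) (ι K (LGen.edge e))
  | r_ghost (e : G.E) : LRel K G (ι K (LGen.vert (G.r e)) * ι K (LGen.ghost e)) (ι K (LGen.ghost e))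
  | ghost_s (e : G.E) : LRel K G (ι K (LGen.ghost e) * ι K (LGen.vert (G.s e))) (ι K (LGen.ghost e))
  | ck1 (e f : G.E) : LRel K G (ι K (LGen.ghost e) * ι K (LGen.edge f))
      (if e = f then ι K (LGen.vert (G.r e)) else 0)
  | ck2 (v : G.V) (h : ¬ G.IsSink v) :
      LRel K G (∑ e ∈ Finset.univ.filter (fun e => G.s e = v),
        ι K (LGen.edge e) * ι K (LGen.ghost e)) (ι K (LGen.vert v))

/-- The Leavitt path algebra of a finite graph `G` over the field `K`. -/
def LPA (K : Type) [Field K] (G : DirGraph) : Type := RingQuot (LRel K G)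

instance (K : Type) [Field K] (G : DirGraph) : Ring (LPA K G) :=
  inferInstanceAs (Ring (RingQuot (LRel K G)))
instance (K : Type) [Field K] (G : DirGraph) : Algebra K (LPA K G) :=
  inferInstanceAs (Algebra K (RingQuot (LRel K G)))

/-- The image of a generator in the Leavitt path algebra. -/
def LPA.gen (K : Type) [Field K] (G : DirGraph) (g : LGen G) : LPA K G :=
  RingQuot.mkAlgHom K (LRel K G) (FreeAlgebra.ι K g)

/-- The vertex idempotent `v ∈ L_K(G)`. -/
def LPA.vert (K : Type) [Field K] (G : DirGraph) (v : G.V) : LPA K G :=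
  LPA.gen K G (LGen.vert v)

/-- Weight of a generator: `deg v = 0`, `deg e = 1`, `deg e* = -1`. -/
def LGen.wt {G : DirGraph} : LGen G → ℤ
  | .vert _ => 0
  | .edge _ => 1
  | .ghost _ => -1

/-- The degree-`n` component of the natural ℤ-grading of the Leavitt path algebra:
the `K`-span of all monomials in the generators of total weight `n`. -/
def lpaComp (K : Type) [Field K] (G : DirGraph) (n : ℤ) : Submodule K (LPA K G) :=
  Submodule.span K {x | ∃ l : List (LGen G),
    (l.map LGen.wt).sum = n ∧ x = (l.map (LPA.gen K G)).prod}

/-- `L_K(G)` is strongly graded: `AᵢAⱼ = Aᵢ₊ⱼ` for all `i, j ∈ ℤ`. -/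
def LPAStronglyGraded (K : Type) [Field K] (G : DirGraph) : Prop :=
  ∀ m n : ℤ, lpaComp K G m * lpaComp K G n = lpaComp K G (m + n)
namespace LPAProof

/-- `l` is a path starting at `u` (edges in travel order). -/
def gIsPath (G : DirGraph) : G.V → List G.E → Prop
  | _, [] => True
  | u, e :: l => G.s e = u ∧ gIsPath G (G.r e) l

/-- The endpoint of a path starting at `u`. -/
def gDst (G : DirGraph) : G.V → List G.E → G.V
  | u, [] => u
  | _, e :: l => gDst G (G.r e) l

/-- A path ending at a sink. -/
structure SPath (G : DirGraph) : Type where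
  u : G.V
  l : List G.E
  path : gIsPath G u l
  sink : G.IsSink (gDst G u l)

theorem SPath.ext' {G : DirGraph} {p q : SPath G} (hu : p.u = q.u) (hl : p.l = q.l) : p = q := by
  cases p; cases q; cases hu; cases hl; rfl

variable (K : Type) [Field K] (G : DirGraph)

/-- Prepend an edge to a sink-path. -/
def SPath.cons {G : DirGraph} (p : SPath G) (e : G.E) (h : G.r e = p.u) : SPath G :=
  ⟨G.s e, e :: p.l, ⟨rfl, by rw [h]; exact p.path⟩,
    by show G.IsSink (gDst G (G.r e) p.l); rw [h]; exact p.sink⟩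

noncomputable def vertAct (v : G.V) (p : SPath G) : SPath G →₀ K :=
  if p.u = v then Finsupp.single p 1 else 0

noncomputable def edgeAct (e : G.E) (p : SPath G) : SPath G →₀ K :=
  if h : G.r e = p.u then Finsupp.single (p.cons e h) 1 else 0

noncomputable def ghostAct (e : G.E) : SPath G → (SPath G →₀ K)
  | ⟨_, [], _, _⟩ => 0
  | ⟨_, f :: l, hp, hs⟩ =>
    if h : f = e then Finsupp.single ⟨G.r e, l, by rw [← h]; exact hp.2, by rw [← h]; exact hs⟩ 1
    else 0

noncomputable def actF : LGen G → SPath G → (SPath G →₀ K)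
  | .vert v => vertAct K G v
  | .edge e => edgeAct K G e
  | .ghost e => ghostAct K G e

noncomputable def act (g : LGen G) : Module.End K (SPath G →₀ K) :=
  Finsupp.lift _ K _ (actF K G g)

theorem act_single (g : LGen G) (p : SPath G) :
    act K G g (Finsupp.single p 1) = actF K G g p := by
  simp [act, Finsupp.lift_apply, Finsupp.sum_single_index]

theorem end_ext {f g : Module.End K (SPath G →₀ K)}
    (h : ∀ p, f (Finsupp.single p 1) = g (Finsupp.single p 1)) : f = g := by
  refine Finsupp.lhom_ext fun p b => ?_
  have hb : (Finsupp.single p b : SPath G →₀ K) = b • Finsupp.single p (1 : K) := by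
    rw [Finsupp.smul_single, smul_eq_mul, mul_one]
  rw [hb, map_smul, map_smul, h]

end LPAProof
namespace LPAProof
variable (K : Type) [Field K] (G : DirGraph)

theorem single_congr {p q : SPath G} (hu : p.u = q.u) (hl : p.l = q.l) :
    (Finsupp.single p 1 : SPath G →₀ K) = Finsupp.single q 1 := by
  rw [SPath.ext' hu hl]

theorem ghostAct_cons (e f : G.E) (p : SPath G) (h : G.r f = p.u) :
    ghostAct K G e (p.cons f h) = if f = e then Finsupp.single p 1 else 0 := by
  simp only [SPath.cons]
  by_cases hfe : f = e
  · subst hfe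
    simp only [ghostAct, dif_pos rfl, if_pos rfl]
    exact single_congr K G h rfl
  · simp [ghostAct, hfe]

theorem act_rel : ∀ ⦃x y : FreeAlgebra K (LGen G)⦄, LRel K G x y →
    FreeAlgebra.lift K (act K G) x = FreeAlgebra.lift K (act K G) y := by
  intro x y h
  induction h with
  | vert_mul v w =>
    split_ifs with hvw
    · subst hvw
      simp only [map_mul, FreeAlgebra.lift_ι_apply]
      refine end_ext K G fun p => ?_
      by_cases h : p.u = v <;>
        simp [Module.End.mul_apply, act_single, actF, vertAct, h]
    · simp only [map_mul, FreeAlgebra.lift_ι_apply, map_zero]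
      refine end_ext K G fun p => ?_
      by_cases h : p.u = w <;> by_cases h' : p.u = v <;>
        simp_all [Module.End.mul_apply, act_single, actF, vertAct]
  | sum_verts =>
    simp only [map_sum, map_one, FreeAlgebra.lift_ι_apply]
    refine end_ext K G fun p => ?_
    simp [LinearMap.sum_apply, act_single, actF, vertAct, Module.End.one_apply]
  | s_edge e =>
    simp only [map_mul, FreeAlgebra.lift_ι_apply]
    refine end_ext K G fun p => ?_
    by_cases h : G.r e = p.u <;>
      simp [Module.End.mul_apply, act_single, actF, vertAct, edgeAct, h, SPath.cons]
  | edge_r e =>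
    simp only [map_mul, FreeAlgebra.lift_ι_apply]
    refine end_ext K G fun p => ?_
    by_cases h : p.u = G.r e
    · simp [Module.End.mul_apply, act_single, actF, vertAct, edgeAct, h]
    · have h' : ¬ (G.r e = p.u) := fun hh => h hh.symm
      simp [Module.End.mul_apply, act_single, actF, vertAct, edgeAct, h, h']
  | r_ghost e =>
    simp only [map_mul, FreeAlgebra.lift_ι_apply]
    refine end_ext K G fun p => ?_
    obtain ⟨u, _ | ⟨f, l⟩, hp, hs⟩ := p
    · simp [Module.End.mul_apply, act_single, actF, ghostAct]
    · by_cases h : f = e <;>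
        simp [Module.End.mul_apply, act_single, actF, ghostAct, vertAct, h]
  | ghost_s e =>
    simp only [map_mul, FreeAlgebra.lift_ι_apply]
    refine end_ext K G fun p => ?_
    obtain ⟨u, _ | ⟨f, l⟩, hp, hs⟩ := p
    · by_cases hu : u = G.s e <;>
        simp [Module.End.mul_apply, act_single, actF, ghostAct, vertAct, hu]
    · by_cases h : f = e
      · subst h
        have hu : u = G.s f := hp.1.symm
        simp [Module.End.mul_apply, act_single, actF, ghostAct, vertAct, hu]
      · by_cases hu : u = G.s e <;>
          simp [Module.End.mul_apply, act_single, actF, ghostAct, vertAct, h, hu]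
  | ck1 e f =>
    split_ifs with hef
    · subst hef
      simp only [map_mul, FreeAlgebra.lift_ι_apply]
      refine end_ext K G fun p => ?_
      by_cases h : G.r e = p.u
      · simp only [Module.End.mul_apply, act_single, actF, edgeAct, dif_pos h]
        rw [ghostAct_cons, if_pos rfl]
        simp only [vertAct, if_pos h.symm]
      · have h2 : ¬ (p.u = G.r e) := fun hh => h hh.symm
        simp [Module.End.mul_apply, act_single, actF, vertAct, edgeAct, h, h2]
    · simp only [map_mul, FreeAlgebra.lift_ι_apply, map_zero]
      refine end_ext K G fun p => ?_
      by_cases h : G.r f = p.u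
      · have hfe : ¬ (f = e) := fun hh => hef hh.symm
        simp [Module.End.mul_apply, act_single, actF, ghostAct_cons, edgeAct, h, hfe]
      · simp [Module.End.mul_apply, act_single, actF, edgeAct, h]
  | ck2 v hv =>
    simp only [map_sum, map_mul, FreeAlgebra.lift_ι_apply]
    refine end_ext K G fun p => ?_
    obtain ⟨u, _ | ⟨f, l⟩, hp, hs⟩ := p
    · have huv : u ≠ v := fun h => hv (h ▸ hs)
      simp [LinearMap.sum_apply, Module.End.mul_apply, act_single, actF, ghostAct, vertAct, huv]
    · rw [LinearMap.sum_apply]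
      by_cases huv : u = v
      · subst huv
        rw [Finset.sum_eq_single f]
        · have hfu : G.s f = u := hp.1
          simp [Module.End.mul_apply, act_single, actF, ghostAct, vertAct, edgeAct, hfu,
            SPath.cons]
        · intro e he hne
          have hfe : ¬ (f = e) := fun h => hne h.symm
          simp [Module.End.mul_apply, act_single, actF, ghostAct, hfe]
        · intro hne
          simp only [Finset.mem_filter, Finset.mem_univ, true_and] at hne
          exact absurd hp.1 hne
      · rw [Finset.sum_eq_zero]
        · simp [act_single, actF, vertAct, huv]
        · intro e he
          simp only [Finset.mem_filter, Finset.mem_univ, true_and] at he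
          have hfe : ¬ (f = e) := fun h => huv ((h ▸ hp.1 : G.s e = u).symm.trans he)
          simp [Module.End.mul_apply, act_single, actF, ghostAct, hfe]

end LPAProof
namespace LPAProof
variable (K : Type) [Field K] (G : DirGraph)

/-- The representation of the Leavitt path algebra on paths ending at sinks. -/
noncomputable def ψ : LPA K G →ₐ[K] Module.End K (SPath G →₀ K) :=
  RingQuot.liftAlgHom K ⟨FreeAlgebra.lift K (act K G), act_rel K G⟩

theorem ψ_gen (g : LGen G) : ψ K G (LPA.gen K G g) = act K G g := by
  rw [LPA.gen, ψ]
  erw [RingQuot.liftAlgHom_mkAlgHom_apply]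
  rw [FreeAlgebra.lift_ι_apply]

/-- Span of basis paths of a given length. -/
noncomputable def lenSub (n : ℤ) : Submodule K (SPath G →₀ K) :=
  Submodule.span K {x | ∃ p : SPath G, (p.l.length : ℤ) = n ∧ x = Finsupp.single p 1}

theorem act_lenSub (g : LGen G) {n : ℤ} {x : SPath G →₀ K} (hx : x ∈ lenSub K G n) :
    act K G g x ∈ lenSub K G (n + g.wt) := by
  refine Submodule.span_induction ?_ ?_ ?_ ?_ hx
  · rintro x ⟨p, hlen, rfl⟩
    rw [act_single]
    cases g with
    | vert v =>
      simp only [actF, vertAct]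
      split_ifs
      · exact Submodule.subset_span ⟨p, by simpa [LGen.wt] using hlen, rfl⟩
      · exact Submodule.zero_mem _
    | edge e =>
      simp only [actF, edgeAct]
      split_ifs with h
      · refine Submodule.subset_span ⟨p.cons e h, ?_, rfl⟩
        simp only [SPath.cons, List.length_cons, LGen.wt]
        push_cast
        omega
      · exact Submodule.zero_mem _
    | ghost e =>
      obtain ⟨u, _ | ⟨f, l⟩, hp, hs⟩ := p
      · simp only [actF, ghostAct]
        exact Submodule.zero_mem _
      · simp only [actF, ghostAct]
        split_ifs with h
        · refine Submodule.subset_span ⟨_, ?_, rfl⟩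
          simp only [List.length_cons, LGen.wt] at hlen ⊢
          push_cast at hlen ⊢
          omega
        · exact Submodule.zero_mem _
  · simp only [map_zero]
    exact Submodule.zero_mem _
  · intro a b _ _ ha hb
    rw [map_add]
    exact Submodule.add_mem _ ha hb
  · intro k a _ ha
    rw [map_smul]
    exact Submodule.smul_mem _ _ ha

theorem prod_act_lenSub (l : List (LGen G)) {n : ℤ} {x : SPath G →₀ K}
    (hx : x ∈ lenSub K G n) :
    ψ K G ((l.map (LPA.gen K G)).prod) x ∈ lenSub K G (n + (l.map LGen.wt).sum) := by
  induction l generalizing n x with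
  | nil => simpa using hx
  | cons g t ih =>
    simp only [List.map_cons, List.prod_cons, map_mul, Module.End.mul_apply, List.sum_cons]
    have hi : n + (g.wt + (t.map LGen.wt).sum) = (n + (t.map LGen.wt).sum) + g.wt := by ring
    rw [hi, ψ_gen]
    exact act_lenSub K G g (ih hx)

theorem comp_act_lenSub {m n : ℤ} {a : LPA K G} {x : SPath G →₀ K}
    (ha : a ∈ lpaComp K G m) (hx : x ∈ lenSub K G n) :
    ψ K G a x ∈ lenSub K G (n + m) := by
  refine Submodule.span_induction ?_ ?_ ?_ ?_ ha
  · rintro b ⟨l, hl, rfl⟩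
    have := prod_act_lenSub K G l hx
    rwa [hl] at this
  · simp only [map_zero, LinearMap.zero_apply]
    exact Submodule.zero_mem _
  · intro b c _ _ hb hc
    rw [map_add, LinearMap.add_apply]
    exact Submodule.add_mem _ hb hc
  · intro k b _ hb
    rw [map_smul, LinearMap.smul_apply]
    exact Submodule.smul_mem _ _ hb

theorem lenSub_neg {n : ℤ} (hn : n < 0) : lenSub K G n = ⊥ := by
  rw [lenSub, Submodule.span_eq_bot]
  rintro x ⟨p, hp, rfl⟩
  exfalso
  omega

theorem ghost_kills (e : G.E) {y : SPath G →₀ K} (hy : y ∈ lenSub K G 0) :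
    ψ K G (LPA.gen K G (LGen.ghost e)) y = 0 := by
  have hm : LPA.gen K G (LGen.ghost e) ∈ lpaComp K G (-1) :=
    Submodule.subset_span ⟨[LGen.ghost e], by simp [LGen.wt], by simp⟩
  have := comp_act_lenSub K G hm hy
  rw [show (0 : ℤ) + (-1) = -1 by ring, lenSub_neg K G (by omega)] at this
  simpa using this

/-! ### Identities in the Leavitt path algebra -/

theorem lrel_eq {x y : FreeAlgebra K (LGen G)} (h : LRel K G x y) :
    RingQuot.mkAlgHom K (LRel K G) x = RingQuot.mkAlgHom K (LRel K G) y :=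
  RingQuot.mkAlgHom_rel K h

theorem gen_sum_verts : ∑ v : G.V, LPA.gen K G (LGen.vert v) = 1 := by
  have := lrel_eq K G (LRel.sum_verts)
  rw [map_sum, map_one] at this
  exact this

theorem gen_ck1 (e f : G.E) :
    LPA.gen K G (LGen.ghost e) * LPA.gen K G (LGen.edge f) =
      if e = f then LPA.gen K G (LGen.vert (G.r e)) else 0 := by
  have := lrel_eq K G (LRel.ck1 e f)
  rw [map_mul, apply_ite (RingQuot.mkAlgHom K (LRel K G)), map_zero] at this
  exact this

theorem gen_ck2 (v : G.V) (h : ¬ G.IsSink v) :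
    ∑ e ∈ Finset.univ.filter (fun e => G.s e = v),
      LPA.gen K G (LGen.edge e) * LPA.gen K G (LGen.ghost e) = LPA.gen K G (LGen.vert v) := by
  have := lrel_eq K G (LRel.ck2 v h)
  rw [map_sum] at this
  simp only [map_mul] at this
  exact this

theorem gen_mem (g : LGen G) : LPA.gen K G g ∈ lpaComp K G g.wt :=
  Submodule.subset_span ⟨[g], by simp, by simp⟩

theorem comp_mul {m n : ℤ} {a b : LPA K G} (ha : a ∈ lpaComp K G m)
    (hb : b ∈ lpaComp K G n) : a * b ∈ lpaComp K G (m + n) := by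
  refine Submodule.span_induction ?_ ?_ ?_ ?_ ha
  · rintro a' ⟨l1, hl1, rfl⟩
    refine Submodule.span_induction ?_ ?_ ?_ ?_ hb
    · rintro b' ⟨l2, hl2, rfl⟩
      refine Submodule.subset_span ⟨l1 ++ l2, ?_, ?_⟩
      · simp [hl1, hl2]
      · simp [List.prod_append]
    · rw [mul_zero]; exact Submodule.zero_mem _
    · intro x y _ _ hx hy
      rw [mul_add]; exact Submodule.add_mem _ hx hy
    · intro k x _ hx
      rw [mul_smul_comm]; exact Submodule.smul_mem _ _ hx
  · rw [zero_mul]; exact Submodule.zero_mem _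
  · intro x y _ _ hx hy
    rw [add_mul]; exact Submodule.add_mem _ hx hy
  · intro k x _ hx
    rw [smul_mul_assoc]; exact Submodule.smul_mem _ _ hx

end LPAProof
namespace LPAProof
variable (K : Type) [Field K] (G : DirGraph)
theorem gen_mem' (g : LGen G) (n : ℤ) (h : LGen.wt g = n) :
    LPA.gen K G g ∈ lpaComp K G n := h ▸ gen_mem K G g
end LPAProof
set_option maxHeartbeats 1000000 in

/-- Let `E` be a finite directed graph with no sources, and let
`t₊ = Σ_v c v`, `t₋ = Σ_v (c v)*` where `c v` is a chosen edge with `r (c v) = v` for each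
vertex `v`.  Then `t₊t₋` is a full idempotent of `L_K(E)₀` (i.e. the two-sided ideal of
the ring `L_K(E)₀` generated by `t₊t₋`, namely the additive group generated by all
`r (t₊t₋) r'` with `r, r' ∈ L_K(E)₀`, is all of `L_K(E)₀`) if and only if `E` has no
sinks. -/
theorem tptm_full_idempotent_iff_no_sinks (K : Type) [Field K] (G : DirGraph)
    (hns : ¬ ∃ v : G.V, G.IsSource v) (c : G.V → G.E) (hc : ∀ v, G.r (c v) = v) :
    letI tp : LPA K G := ∑ v : G.V, LPA.gen K G (LGen.edge (c v))
    letI tm : LPA K G := ∑ v : G.V, LPA.gen K G (LGen.ghost (c v))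
    ((∀ a ∈ lpaComp K G 0, a ∈ AddSubgroup.closure
        {x | ∃ r ∈ lpaComp K G 0, ∃ r' ∈ lpaComp K G 0, x = r * (tp * tm) * r'}) ↔
      ¬ ∃ v : G.V, G.IsSink v) := by
  set tp : LPA K G := ∑ v : G.V, LPA.gen K G (LGen.edge (c v)) with htp_def
  set tm : LPA K G := ∑ v : G.V, LPA.gen K G (LGen.ghost (c v)) with htm_def
  constructor
  · -- full ⟹ no sinks
    intro hfull
    rintro ⟨w, hw⟩
    classical
    set pw : LPAProof.SPath G := ⟨w, [], trivial, hw⟩ with hpw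
    have hv0 : LPA.gen K G (LGen.vert w) ∈ lpaComp K G 0 := LPAProof.gen_mem' K G _ 0 rfl
    have hcl := hfull _ hv0
    set F : LPA K G →+ (LPAProof.SPath G →₀ K) :=
      AddMonoidHom.mk' (fun a => LPAProof.ψ K G a (Finsupp.single pw 1))
        (fun a b => by simp only [map_add, LinearMap.add_apply]) with hF
    have hx0 : (Finsupp.single pw 1 : LPAProof.SPath G →₀ K) ∈ LPAProof.lenSub K G 0 :=
      Submodule.subset_span ⟨pw, by simp, rfl⟩
    have hS : ∀ x ∈ {x | ∃ r ∈ lpaComp K G 0, ∃ r' ∈ lpaComp K G 0, x = r * (tp * tm) * r'},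
        x ∈ F.ker := by
      rintro x ⟨r, hr, r', hr', rfl⟩
      rw [AddMonoidHom.mem_ker]
      have h1 : LPAProof.ψ K G r' (Finsupp.single pw 1) ∈ LPAProof.lenSub K G 0 := by
        simpa using LPAProof.comp_act_lenSub K G hr' hx0
      have h2 : LPAProof.ψ K G tm (LPAProof.ψ K G r' (Finsupp.single pw 1)) = 0 := by
        rw [htm_def, map_sum, LinearMap.sum_apply]
        exact Finset.sum_eq_zero fun v _ => LPAProof.ghost_kills K G _ h1
      show LPAProof.ψ K G (r * (tp * tm) * r') (Finsupp.single pw 1) = 0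
      rw [map_mul, map_mul, map_mul, Module.End.mul_apply, Module.End.mul_apply,
        Module.End.mul_apply, h2, map_zero, map_zero]
    have hker : F (LPA.gen K G (LGen.vert w)) = 0 := by
      have hle := (AddSubgroup.closure_le F.ker).mpr hS
      exact AddMonoidHom.mem_ker.mp (hle hcl)
    have heval : F (LPA.gen K G (LGen.vert w)) = Finsupp.single pw 1 := by
      show LPAProof.ψ K G (LPA.gen K G (LGen.vert w)) (Finsupp.single pw 1) = _
      rw [LPAProof.ψ_gen, LPAProof.act_single]
      simp [LPAProof.actF, LPAProof.vertAct]
      exact fun h => absurd rfl h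
    rw [heval] at hker
    exact one_ne_zero (Finsupp.single_eq_zero.mp hker)
  · -- no sinks ⟹ full
    intro hnosink a ha
    have hns' : ∀ v : G.V, ¬ G.IsSink v := fun v hv => hnosink ⟨v, hv⟩
    have htmtp : tm * tp = 1 := by
      rw [htm_def, htp_def, Finset.sum_mul_sum]
      have hvw : ∀ v w : G.V, LPA.gen K G (LGen.ghost (c v)) * LPA.gen K G (LGen.edge (c w)) =
          if v = w then LPA.gen K G (LGen.vert v) else 0 := by
        intro v w
        rw [LPAProof.gen_ck1]
        by_cases h : v = w
        · subst h; rw [if_pos rfl, if_pos rfl, hc]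
        · rw [if_neg h, if_neg (fun hcc : c v = c w => h (by rw [← hc v, ← hc w, hcc]))]
      simp_rw [hvw]
      simp only [Finset.sum_ite_eq, Finset.mem_univ, if_true]
      exact LPAProof.gen_sum_verts K G
    have hmt : ∀ x : LPA K G, tm * (tp * x) = x := fun x => by
      rw [← mul_assoc, htmtp, one_mul]
    have htm : tm ∈ lpaComp K G (-1) := by
      rw [htm_def]
      exact Submodule.sum_mem _ fun v _ => LPAProof.gen_mem' K G (LGen.ghost (c v)) (-1) rfl
    have htp : tp ∈ lpaComp K G 1 := by
      rw [htp_def]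
      exact Submodule.sum_mem _ fun v _ => LPAProof.gen_mem' K G (LGen.edge (c v)) 1 rfl
    have hone : ∑ e : G.E, LPA.gen K G (LGen.edge e) * LPA.gen K G (LGen.ghost e) = 1 := by
      rw [← LPAProof.gen_sum_verts K G,
        ← Finset.sum_fiberwise_of_maps_to (fun e _ => Finset.mem_univ (G.s e))
          (fun e => LPA.gen K G (LGen.edge e) * LPA.gen K G (LGen.ghost e))]
      exact Finset.sum_congr rfl fun v _ => LPAProof.gen_ck2 K G v (hns' v)
    have ha2 : a = ∑ e : G.E,
        a * (LPA.gen K G (LGen.edge e) * LPA.gen K G (LGen.ghost e)) := by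
      rw [← Finset.mul_sum, hone, mul_one]
    rw [ha2]
    refine AddSubgroup.sum_mem _ fun e _ => AddSubgroup.subset_closure ?_
    refine ⟨a * LPA.gen K G (LGen.edge e) * tm, ?_, tp * LPA.gen K G (LGen.ghost e), ?_, ?_⟩
    · have h1 := LPAProof.comp_mul K G
        (LPAProof.comp_mul K G ha (LPAProof.gen_mem' K G (LGen.edge e) 1 rfl)) htm
      rwa [show ((0 : ℤ) + 1 + (-1)) = 0 by norm_num] at h1
    · have h1 := LPAProof.comp_mul K G htp (LPAProof.gen_mem' K G (LGen.ghost e) (-1) rfl)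
      rwa [show ((1 : ℤ) + (-1)) = 0 by norm_num] at h1
    · simp only [mul_assoc, hmt]
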